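/- Let Ω ⊆ ℝ^N be a Lebesgue-measurable set and p: Ω → ℝ measurable with 1 < p⁻ ≤ p(x) ≤ p⁺ < ∞ for a.e. x. Let (u_n) be a sequence of measurable functions Ω → ℝ such that sup_n ∫_Ω |u_n(x)|^{p(x)} dx < ∞ and u_n(x) → u(x) for a.e. x ∈ Ω. Then ∫_Ω |u(x)|^{p(x)} dx < ∞ and u_n converges weakly to u in L^{p(·)}(Ω), i.e. ∫_Ω u_n(x) φ(x) dx → ∫_Ω u(x) φ(x) dx as n → ∞ for every measurable φ: Ω → ℝ with ∫_Ω |φ(x)|^{p'(x)} dx < ∞. -/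

import Mathlib

open MeasureTheory Filter ENNReal

lemma young_eps {pm p a b ε : ℝ} (hpm : 1 < pm) (hp : pm ≤ p)
    (ha : 0 ≤ a) (hb : 0 ≤ b) (hε : 0 < ε) (hε1 : ε ≤ 1) :
    a * b ≤ ε ^ pm * a ^ p + ε ^ (-(pm / (pm - 1))) * b ^ (p / (p - 1)) := by
  have hp1 : 1 < p := lt_of_lt_of_le hpm hp
  have hp0 : 0 < p - 1 := by linarith
  have hpm0 : 0 < pm - 1 := by linarith
  have hpq : p.HolderConjugate (p / (p - 1)) := Real.HolderConjugate.conjExponent hp1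
  have hq1 : 1 ≤ p / (p - 1) := by
    rw [le_div_iff₀ hp0]; linarith
  have key : a * b = (ε * a) * (b / ε) := by field_simp
  have h2 : (ε * a) * (b / ε) ≤ (ε * a) ^ p / p + (b / ε) ^ (p / (p - 1)) / (p / (p - 1)) :=
    Real.young_inequality_of_nonneg (by positivity) (by positivity) hpq
  have h3 : (ε * a) ^ p / p ≤ ε ^ pm * a ^ p := by
    rw [Real.mul_rpow hε.le ha]
    calc ε ^ p * a ^ p / p ≤ ε ^ p * a ^ p := by
          apply div_le_self (by positivity) (by linarith)
      _ ≤ ε ^ pm * a ^ p := by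
          apply mul_le_mul_of_nonneg_right _ (Real.rpow_nonneg ha p)
          exact Real.rpow_le_rpow_of_exponent_ge hε hε1 hp
  have h4 : (b / ε) ^ (p / (p - 1)) / (p / (p - 1)) ≤ ε ^ (-(pm / (pm - 1))) * b ^ (p / (p - 1)) := by
    rw [div_eq_mul_inv b ε, Real.mul_rpow hb (by positivity), ← Real.rpow_neg_one ε,
      ← Real.rpow_mul hε.le, neg_one_mul]
    calc b ^ (p / (p - 1)) * ε ^ (-(p / (p - 1))) / (p / (p - 1))
        ≤ b ^ (p / (p - 1)) * ε ^ (-(p / (p - 1))) := by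
          apply div_le_self (by positivity) hq1
      _ ≤ b ^ (p / (p - 1)) * ε ^ (-(pm / (pm - 1))) := by
          apply mul_le_mul_of_nonneg_left _ (Real.rpow_nonneg hb _)
          apply Real.rpow_le_rpow_of_exponent_ge hε hε1
          rw [neg_le_neg_iff, div_le_div_iff₀ hp0 hpm0]
          nlinarith
      _ = _ := mul_comm _ _
  calc a * b = (ε * a) * (b / ε) := key
    _ ≤ _ := h2
    _ ≤ _ := add_le_add h3 h4

lemma abs_sub_rpow_le {a b p pM : ℝ} (hp0 : 0 ≤ p) (hpM : p ≤ pM) :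
    |a - b| ^ p ≤ 2 ^ pM * (|a| ^ p + |b| ^ p) := by
  have h1 : |a - b| ≤ 2 * max |a| |b| := by
    rcases le_total |a| |b| with h | h
    · rw [max_eq_right h]; linarith [abs_sub a b]
    · rw [max_eq_left h]; linarith [abs_sub a b]
  calc |a - b| ^ p ≤ (2 * max |a| |b|) ^ p :=
        Real.rpow_le_rpow (abs_nonneg _) h1 hp0
    _ = 2 ^ p * (max |a| |b|) ^ p :=
        Real.mul_rpow (by norm_num) (le_max_iff.2 (Or.inl (abs_nonneg a)))
    _ ≤ 2 ^ pM * (|a| ^ p + |b| ^ p) := by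
        apply mul_le_mul (Real.rpow_le_rpow_of_exponent_le one_le_two hpM)
        · rcases max_cases |a| |b| with ⟨h, _⟩ | ⟨h, _⟩ <;> rw [h]
          · nlinarith [Real.rpow_nonneg (abs_nonneg b) p]
          · nlinarith [Real.rpow_nonneg (abs_nonneg a) p]
        · positivity
        · positivity

theorem stmt_1 {N : ℕ} (Ω : Set (Fin N → ℝ)) (hΩ : MeasurableSet Ω)
    (p : (Fin N → ℝ) → ℝ) (hp : Measurable p)
    (pm pM : ℝ) (hpm : 1 < pm)
    (hpb : ∀ᵐ x ∂(volume.restrict Ω), pm ≤ p x ∧ p x ≤ pM)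
    (u : ℕ → (Fin N → ℝ) → ℝ) (hu : ∀ n, Measurable (u n))
    (ulim : (Fin N → ℝ) → ℝ) (hulim : Measurable ulim)
    (B : ℝ≥0∞) (hB : B < ⊤)
    (hmod : ∀ n, ∫⁻ x in Ω, ENNReal.ofReal (|u n x| ^ p x) ≤ B)
    (hae : ∀ᵐ x ∂(volume.restrict Ω),
      Tendsto (fun n => u n x) atTop (nhds (ulim x))) :
    (∫⁻ x in Ω, ENNReal.ofReal (|ulim x| ^ p x)) < ⊤ ∧
    ∀ φ : (Fin N → ℝ) → ℝ, Measurable φ →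
      (∫⁻ x in Ω, ENNReal.ofReal (|φ x| ^ (p x / (p x - 1)))) < ⊤ →
      Tendsto (fun n => ∫ x in Ω, u n x * φ x) atTop
        (nhds (∫ x in Ω, ulim x * φ x)) := by
  set μ := volume.restrict Ω with hμ
  have hpm0 : (0:ℝ) < pm := by linarith
  -- measurability helpers
  have humeas : ∀ n, Measurable fun x => ENNReal.ofReal (|u n x| ^ p x) := fun n =>
    ((hu n).abs.pow hp).ennreal_ofReal
  -- Part 1 : Fatou
  have hfinle : (∫⁻ x, ENNReal.ofReal (|ulim x| ^ p x) ∂μ) ≤ B := by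
    have hle : (∫⁻ x, ENNReal.ofReal (|ulim x| ^ p x) ∂μ)
        ≤ Filter.liminf (fun n => ∫⁻ x, ENNReal.ofReal (|u n x| ^ p x) ∂μ) atTop := by
      refine le_trans (le_of_eq (lintegral_congr_ae ?_)) (lintegral_liminf_le humeas)
      filter_upwards [hae, hpb] with x hx hpx
      have hc : ContinuousAt (fun y : ℝ => |y| ^ p x) (ulim x) := by
        exact (Real.continuousAt_rpow_const _ _ (Or.inr (by linarith [hpx.1]))).comp
          continuous_abs.continuousAt
      have ht : Tendsto (fun n => ENNReal.ofReal (|u n x| ^ p x)) atTop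
          (nhds (ENNReal.ofReal (|ulim x| ^ p x))) :=
        (ENNReal.continuous_ofReal.continuousAt.tendsto.comp (hc.tendsto.comp hx))
      exact ht.liminf_eq.symm
    refine hle.trans (liminf_le_of_frequently_le ?_)
    exact Frequently.of_forall fun n => hmod n
  have hfin : (∫⁻ x, ENNReal.ofReal (|ulim x| ^ p x) ∂μ) < ⊤ := lt_of_le_of_lt hfinle hB
  refine ⟨hfin, ?_⟩
  intro φ hφ hφfin
  set q : ℝ := pm / (pm - 1) with hqdef
  -- modular bound for differences
  set C : ℝ≥0∞ := ENNReal.ofReal (2 ^ pM) * (B + B) with hC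
  have hCfin : C ≠ ⊤ := by
    refine ENNReal.mul_ne_top ENNReal.ofReal_ne_top ?_
    exact ENNReal.add_ne_top.2 ⟨hB.ne, hB.ne⟩
  have hdmeas : ∀ n, Measurable fun x => ENNReal.ofReal (|u n x - ulim x| ^ p x) := fun n =>
    (((hu n).sub hulim).abs.pow hp).ennreal_ofReal
  have hdiff : ∀ n, (∫⁻ x, ENNReal.ofReal (|u n x - ulim x| ^ p x) ∂μ) ≤ C := by
    intro n
    have hpt : ∀ᵐ x ∂μ, ENNReal.ofReal (|u n x - ulim x| ^ p x)
        ≤ ENNReal.ofReal (2 ^ pM) *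
          (ENNReal.ofReal (|u n x| ^ p x) + ENNReal.ofReal (|ulim x| ^ p x)) := by
      filter_upwards [hpb] with x hpx
      have h := abs_sub_rpow_le (a := u n x) (b := ulim x) (by linarith [hpx.1]) hpx.2
      calc ENNReal.ofReal (|u n x - ulim x| ^ p x)
          ≤ ENNReal.ofReal (2 ^ pM * (|u n x| ^ p x + |ulim x| ^ p x)) :=
            ENNReal.ofReal_le_ofReal h
        _ = ENNReal.ofReal (2 ^ pM) *
            (ENNReal.ofReal (|u n x| ^ p x) + ENNReal.ofReal (|ulim x| ^ p x)) := by
            rw [ENNReal.ofReal_mul (by positivity),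
              ENNReal.ofReal_add (by positivity) (by positivity)]
    calc (∫⁻ x, ENNReal.ofReal (|u n x - ulim x| ^ p x) ∂μ)
        ≤ ∫⁻ x, ENNReal.ofReal (2 ^ pM) *
            (ENNReal.ofReal (|u n x| ^ p x) + ENNReal.ofReal (|ulim x| ^ p x)) ∂μ :=
          lintegral_mono_ae hpt
      _ = ENNReal.ofReal (2 ^ pM) *
          ((∫⁻ x, ENNReal.ofReal (|u n x| ^ p x) ∂μ) +
            ∫⁻ x, ENNReal.ofReal (|ulim x| ^ p x) ∂μ) := by
          rw [lintegral_const_mul _ (f := fun x => ENNReal.ofReal (|u n x| ^ p x) + ENNReal.ofReal (|ulim x| ^ p x)) ((humeas n).add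
            (hulim.abs.pow hp).ennreal_ofReal),
            lintegral_add_left (humeas n)]
      _ ≤ C := by
          rw [hC]
          exact mul_le_mul_right (add_le_add (hmod n) hfinle) _
  -- main convergence of ∫⁻ |u n - ulim| * |φ|
  have Itend : Tendsto (fun n => ∫⁻ x, ENNReal.ofReal (|u n x - ulim x| * |φ x|) ∂μ)
      atTop (nhds 0) := by
    rw [ENNReal.tendsto_nhds_zero]
    intro ε' hε'
    -- choose small real ε
    obtain ⟨ε, hε0, hε1, hεsmall⟩ : ∃ ε : ℝ, 0 < ε ∧ ε ≤ 1 ∧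
        ENNReal.ofReal (ε ^ pm) * C ≤ ε' / 2 := by
      have htend : Tendsto (fun k : ℕ => ENNReal.ofReal ((1 / (k + 1) : ℝ) ^ pm) * C)
          atTop (nhds 0) := by
        have h1 : Tendsto (fun k : ℕ => ((1 / (k + 1) : ℝ)) ^ pm) atTop (nhds 0) := by
          have h0 : Tendsto (fun k : ℕ => (1 / (k + 1) : ℝ)) atTop (nhds 0) :=
            tendsto_one_div_add_atTop_nhds_zero_nat
          have hc : ContinuousAt (fun y : ℝ => y ^ pm) 0 :=
            Real.continuousAt_rpow_const _ _ (Or.inr (by linarith))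
          have := hc.tendsto.comp h0
          simpa [Real.zero_rpow (by linarith : pm ≠ 0), Function.comp_def] using this
        have h2 : Tendsto (fun k : ℕ => ENNReal.ofReal ((1 / (k + 1) : ℝ) ^ pm)) atTop
            (nhds 0) := by
          simpa [Function.comp_def] using (ENNReal.continuous_ofReal.continuousAt.tendsto.comp h1)
        simpa using ENNReal.Tendsto.mul_const h2 (Or.inr hCfin)
      have := (htend.eventually_le_const (by
        simpa using ENNReal.half_pos hε'.ne' : (0:ℝ≥0∞) < ε' / 2)).exists
      obtain ⟨k, hk⟩ := this
      exact ⟨1 / (k + 1), by positivity, by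
        rw [div_le_one (by positivity)]; linarith [Nat.cast_nonneg (α := ℝ) k], hk⟩
    -- dominated convergence for the remainder
    set h : ℕ → (Fin N → ℝ) → ℝ := fun n x =>
      max (|u n x - ulim x| * |φ x| - ε ^ pm * |u n x - ulim x| ^ p x) 0 with hhdef
    have hhmeas : ∀ n, Measurable fun x => ENNReal.ofReal (h n x) := fun n => by
      apply Measurable.ennreal_ofReal
      exact ((((hu n).sub hulim).abs.mul hφ.abs).sub
        (measurable_const.mul (((hu n).sub hulim).abs.pow hp))).max measurable_const
    have Htend : Tendsto (fun n => ∫⁻ x, ENNReal.ofReal (h n x) ∂μ) atTop (nhds 0) := by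
      have := tendsto_lintegral_of_dominated_convergence
        (μ := μ) (F := fun n x => ENNReal.ofReal (h n x)) (f := fun _ => 0)
        (bound := fun x => ENNReal.ofReal (ε ^ (-q)) *
          ENNReal.ofReal (|φ x| ^ (p x / (p x - 1))))
        hhmeas ?_ ?_ ?_
      · simpa using this
      · intro n
        filter_upwards [hpb] with x hpx
        have hy := young_eps (a := |u n x - ulim x|) (b := |φ x|) hpm hpx.1
          (abs_nonneg _) (abs_nonneg _) hε0 hε1
        have : h n x ≤ ε ^ (-q) * |φ x| ^ (p x / (p x - 1)) := by
          apply max_le (by linarith) (by positivity)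
        calc ENNReal.ofReal (h n x)
            ≤ ENNReal.ofReal (ε ^ (-q) * |φ x| ^ (p x / (p x - 1))) :=
              ENNReal.ofReal_le_ofReal this
          _ = _ := ENNReal.ofReal_mul (by positivity)
      · rw [lintegral_const_mul _ (f := fun x => ENNReal.ofReal (|φ x| ^ (p x / (p x - 1)))) (hφ.abs.pow (hp.div (hp.sub measurable_const))).ennreal_ofReal]
        exact ENNReal.mul_ne_top ENNReal.ofReal_ne_top hφfin.ne
      · filter_upwards [hae] with x hx
        have h0 : Tendsto (fun n => |u n x - ulim x| * |φ x|) atTop (nhds 0) := by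
          have : Tendsto (fun n => u n x - ulim x) atTop (nhds 0) := by
            simpa using hx.sub_const (ulim x)
          have habs : Tendsto (fun n => |u n x - ulim x|) atTop (nhds 0) := by
            simpa using this.abs
          simpa using habs.mul_const |φ x|
        have hsq : Tendsto (fun n => h n x) atTop (nhds 0) := by
          apply squeeze_zero (fun n => le_max_right _ _) (fun n => ?_) h0
          apply max_le _ (by positivity)
          have : 0 ≤ ε ^ pm * |u n x - ulim x| ^ p x := by positivity
          linarith
        simpa [Function.comp_def] using (ENNReal.continuous_ofReal.continuousAt.tendsto.comp hsq)
    -- combine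
    have key : ∀ n, (∫⁻ x, ENNReal.ofReal (|u n x - ulim x| * |φ x|) ∂μ)
        ≤ (∫⁻ x, ENNReal.ofReal (h n x) ∂μ) + ENNReal.ofReal (ε ^ pm) * C := by
      intro n
      have hpt : ∀ᵐ x ∂μ, ENNReal.ofReal (|u n x - ulim x| * |φ x|)
          ≤ ENNReal.ofReal (h n x) +
            ENNReal.ofReal (ε ^ pm) * ENNReal.ofReal (|u n x - ulim x| ^ p x) := by
        filter_upwards [] with x
        have h1 : |u n x - ulim x| * |φ x| ≤ h n x + ε ^ pm * |u n x - ulim x| ^ p x := by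
          have := le_max_left (|u n x - ulim x| * |φ x| - ε ^ pm * |u n x - ulim x| ^ p x) 0
          rw [hhdef]; dsimp only; linarith
        calc ENNReal.ofReal (|u n x - ulim x| * |φ x|)
            ≤ ENNReal.ofReal (h n x + ε ^ pm * |u n x - ulim x| ^ p x) :=
              ENNReal.ofReal_le_ofReal h1
          _ ≤ _ := by
              rw [ENNReal.ofReal_add (le_max_right _ _) (by positivity),
                ENNReal.ofReal_mul (by positivity)]
      calc (∫⁻ x, ENNReal.ofReal (|u n x - ulim x| * |φ x|) ∂μ)
          ≤ ∫⁻ x, (ENNReal.ofReal (h n x) +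
              ENNReal.ofReal (ε ^ pm) * ENNReal.ofReal (|u n x - ulim x| ^ p x)) ∂μ :=
            lintegral_mono_ae hpt
        _ = (∫⁻ x, ENNReal.ofReal (h n x) ∂μ) +
            ENNReal.ofReal (ε ^ pm) * ∫⁻ x, ENNReal.ofReal (|u n x - ulim x| ^ p x) ∂μ := by
            rw [lintegral_add_left (hhmeas n), lintegral_const_mul _ (hdmeas n)]
        _ ≤ _ := add_le_add_right (mul_le_mul_right (hdiff n) _) _
    have hev : ∀ᶠ n in atTop, (∫⁻ x, ENNReal.ofReal (h n x) ∂μ) ≤ ε' / 2 :=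
      Htend.eventually_le_const (ENNReal.half_pos hε'.ne')
    filter_upwards [hev] with n hn
    calc (∫⁻ x, ENNReal.ofReal (|u n x - ulim x| * |φ x|) ∂μ)
        ≤ (∫⁻ x, ENNReal.ofReal (h n x) ∂μ) + ENNReal.ofReal (ε ^ pm) * C := key n
      _ ≤ ε' / 2 + ε' / 2 := add_le_add hn hεsmall
      _ = ε' := ENNReal.add_halves ε'
  -- integrability
  have hint : ∀ (v : (Fin N → ℝ) → ℝ), Measurable v →
      (∫⁻ x, ENNReal.ofReal (|v x| ^ p x) ∂μ) ≤ B →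
      Integrable (fun x => v x * φ x) μ := by
    intro v hv hvB
    refine ⟨(hv.mul hφ).aestronglyMeasurable, ?_⟩
    rw [hasFiniteIntegral_iff_norm]
    have hpt : ∀ᵐ x ∂μ, ENNReal.ofReal ‖v x * φ x‖
        ≤ ENNReal.ofReal (|v x| ^ p x) + ENNReal.ofReal (|φ x| ^ (p x / (p x - 1))) := by
      filter_upwards [hpb] with x hpx
      have hy := young_eps (a := |v x|) (b := |φ x|) hpm hpx.1
        (abs_nonneg _) (abs_nonneg _) one_pos le_rfl
      rw [Real.one_rpow, Real.one_rpow, one_mul, one_mul] at hy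
      rw [Real.norm_eq_abs, abs_mul]
      calc ENNReal.ofReal (|v x| * |φ x|)
          ≤ ENNReal.ofReal (|v x| ^ p x + |φ x| ^ (p x / (p x - 1))) :=
            ENNReal.ofReal_le_ofReal hy
        _ = _ := ENNReal.ofReal_add (by positivity) (by positivity)
    calc (∫⁻ x, ENNReal.ofReal ‖v x * φ x‖ ∂μ)
        ≤ ∫⁻ x, (ENNReal.ofReal (|v x| ^ p x) +
            ENNReal.ofReal (|φ x| ^ (p x / (p x - 1)))) ∂μ := lintegral_mono_ae hpt
      _ = (∫⁻ x, ENNReal.ofReal (|v x| ^ p x) ∂μ) +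
          ∫⁻ x, ENNReal.ofReal (|φ x| ^ (p x / (p x - 1))) ∂μ :=
          lintegral_add_left ((hv.abs.pow hp).ennreal_ofReal) _
      _ < ⊤ := ENNReal.add_lt_top.2 ⟨lt_of_le_of_lt hvB hB, hφfin⟩
  have hintn : ∀ n, Integrable (fun x => u n x * φ x) μ := fun n =>
    hint (u n) (hu n) (hmod n)
  have hintlim : Integrable (fun x => ulim x * φ x) μ := hint ulim hulim hfinle
  -- conclude
  rw [← tendsto_sub_nhds_zero_iff]
  apply squeeze_zero_norm (a := fun n =>
    (∫⁻ x, ENNReal.ofReal (|u n x - ulim x| * |φ x|) ∂μ).toReal)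
  · intro n
    rw [← integral_sub (hintn n) hintlim]
    calc ‖∫ x, (u n x * φ x - ulim x * φ x) ∂μ‖
        ≤ (∫⁻ x, ENNReal.ofReal ‖u n x * φ x - ulim x * φ x‖ ∂μ).toReal :=
          norm_integral_le_lintegral_norm _
      _ = _ := by
          congr 1
          apply lintegral_congr fun x => ?_
          rw [Real.norm_eq_abs, ← sub_mul, abs_mul]
  · have := (ENNReal.tendsto_toReal (a := 0) (by simp)).comp Itend
    simpa [Function.comp_def] using this
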